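/- Let F be a field with at least n distinct designated points 1,…,n, let t < n, and let f be a random symmetric bivariate polynomial of degree ≤ t in each variable, chosen uniformly among those with f(0,0) = s for a fixed secret s. For any set B of at most t indices, the joint distribution of the univariate polynomials {f(i,·) : i ∈ B} is independent of s. -/

import Mathlib

open MvPolynomial

section Aux
variable {F : Type*} [Field F]

lemma stmt19_degreeOf_aeval_X (q : Polynomial F) (i j : Fin 2) :
    MvPolynomial.degreeOf j (Polynomial.aeval (MvPolynomial.X i : MvPolynomial (Fin 2) F) q)
      ≤ if j = i then q.natDegree else 0 := by
  rw [Polynomial.aeval_eq_sum_range]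
  refine (MvPolynomial.degreeOf_sum_le _ _ _).trans (Finset.sup_le fun k hk => ?_)
  rw [Finset.mem_range, Nat.lt_succ_iff] at hk
  rw [MvPolynomial.smul_eq_C_mul]
  refine (MvPolynomial.degreeOf_C_mul_le _ _ _).trans ?_
  refine (MvPolynomial.degreeOf_pow_le _ _ _).trans ?_
  rw [MvPolynomial.degreeOf_X]
  by_cases h : j = i <;> simp [h, hk]

end Aux

theorem stmt_19 (F : Type*) [Field F] [Fintype F] (n t : ℕ) (ht : t < n)
    (points : Fin n → F) (hinj : Function.Injective points)
    (hnz : ∀ k, points k ≠ 0)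
    (B : Finset F) (hBcard : B.card ≤ t) (hBpts : ∀ b ∈ B, ∃ k, points k = b)
    (s s' : F) (g : F → Polynomial F) :
    {f : MvPolynomial (Fin 2) F |
        MvPolynomial.degreeOf 0 f ≤ t ∧ MvPolynomial.degreeOf 1 f ≤ t ∧
        MvPolynomial.rename (Equiv.swap (0 : Fin 2) 1) f = f ∧
        MvPolynomial.eval ![0, 0] f = s ∧
        ∀ i ∈ B, MvPolynomial.aeval ![Polynomial.C i, Polynomial.X] f = g i}.ncard
    =
    {f : MvPolynomial (Fin 2) F |
        MvPolynomial.degreeOf 0 f ≤ t ∧ MvPolynomial.degreeOf 1 f ≤ t ∧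
        MvPolynomial.rename (Equiv.swap (0 : Fin 2) 1) f = f ∧
        MvPolynomial.eval ![0, 0] f = s' ∧
        ∀ i ∈ B, MvPolynomial.aeval ![Polynomial.C i, Polynomial.X] f = g i}.ncard := by
  classical
  have hB0 : ∀ b ∈ B, b ≠ 0 := fun b hb => by
    obtain ⟨k, hk⟩ := hBpts b hb; exact hk ▸ hnz k
  -- the univariate correction polynomial
  set q : Polynomial F := ∏ b ∈ B, (Polynomial.C (-b)⁻¹ * (Polynomial.X - Polynomial.C b))
    with hq_def
  have hq0 : q.eval 0 = 1 := by
    rw [hq_def, Polynomial.eval_prod]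
    refine Finset.prod_eq_one fun b hb => ?_
    have : (-b) ≠ 0 := neg_ne_zero.mpr (hB0 b hb)
    simp [inv_mul_cancel₀ this, zero_sub, inv_mul_cancel₀ (hB0 b hb)]
  have hqb : ∀ b ∈ B, q.eval b = 0 := fun b hb => by
    rw [hq_def, Polynomial.eval_prod]
    exact Finset.prod_eq_zero hb (by simp)
  have hqdeg : q.natDegree ≤ t := by
    refine le_trans ?_ hBcard
    refine le_trans (Polynomial.natDegree_prod_le B _) ?_
    have hb1 : ∀ b ∈ B, (Polynomial.C (-b)⁻¹ * (Polynomial.X - Polynomial.C b)).natDegree ≤ 1 :=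
      fun b _ => le_trans Polynomial.natDegree_mul_le (by simp [Polynomial.natDegree_X_sub_C])
    simpa using Finset.sum_le_card_nsmul B _ 1 hb1
  -- the bivariate correction polynomial H(x,y) = q(x) q(y)
  set Q : Fin 2 → MvPolynomial (Fin 2) F :=
    fun i => Polynomial.aeval (MvPolynomial.X i) q with hQ_def
  set H : MvPolynomial (Fin 2) F := Q 0 * Q 1 with hH_def
  have hQdeg : ∀ i j : Fin 2, MvPolynomial.degreeOf j (Q i) ≤ if j = i then t else 0 :=
    fun i j => le_trans (stmt19_degreeOf_aeval_X q i j)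
      (by by_cases h : j = i <;> simp [h, hqdeg])
  have hHdeg : ∀ j : Fin 2, MvPolynomial.degreeOf j H ≤ t := by
    intro j
    refine le_trans (MvPolynomial.degreeOf_mul_le _ _ _) ?_
    have h0 := hQdeg 0 j; have h1 := hQdeg 1 j
    fin_cases j <;> simp_all <;> omega
  have hQswap : ∀ i : Fin 2,
      MvPolynomial.rename (Equiv.swap (0 : Fin 2) 1) (Q i)
        = Q (Equiv.swap (0 : Fin 2) 1 i) := by
    intro i
    rw [hQ_def]
    rw [← Polynomial.aeval_algHom_apply (MvPolynomial.rename (Equiv.swap (0 : Fin 2) 1))]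
    simp
  have hHswap : MvPolynomial.rename (Equiv.swap (0 : Fin 2) 1) H = H := by
    rw [hH_def, map_mul, hQswap, hQswap]
    simp [mul_comm]
  have hQeval : ∀ i : Fin 2, MvPolynomial.eval ![(0:F), 0] (Q i) = 1 := by
    intro i
    have : MvPolynomial.eval ![(0:F), 0] (Q i)
        = MvPolynomial.aeval (R := F) ![(0:F), 0] (Q i) := by
      rw [← MvPolynomial.coe_aeval_eq_eval]; rfl
    rw [this, hQ_def, ← Polynomial.aeval_algHom_apply (MvPolynomial.aeval (R := F) ![(0:F), 0])]
    have hx : (MvPolynomial.aeval (R := F) ![(0:F), 0]) (MvPolynomial.X i) = 0 := by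
      fin_cases i <;> simp
    rw [hx, ← hq0]
    simp [Polynomial.coe_aeval_eq_eval]
  have hHeval : MvPolynomial.eval ![(0:F), 0] H = 1 := by
    rw [hH_def, map_mul, hQeval, hQeval, mul_one]
  have hHrow : ∀ i ∈ B, MvPolynomial.aeval ![Polynomial.C i, Polynomial.X] H = 0 := by
    intro i hi
    have h0 : (MvPolynomial.aeval (R := F) ![Polynomial.C i, Polynomial.X]) (Q 0) = 0 := by
      rw [hQ_def, ← Polynomial.aeval_algHom_apply (MvPolynomial.aeval (R := F) ![Polynomial.C i, Polynomial.X])]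
      have hx : (MvPolynomial.aeval (R := F) ![Polynomial.C i, Polynomial.X]) (MvPolynomial.X 0)
          = Polynomial.CAlgHom (R := F) i := by simp [Polynomial.CAlgHom]
      rw [hx, Polynomial.aeval_algHom_apply Polynomial.CAlgHom]
      have : (Polynomial.aeval i) q = 0 := by
        rw [Polynomial.coe_aeval_eq_eval]; exact hqb i hi
      rw [this]; simp [Polynomial.CAlgHom]
    rw [hH_def, map_mul, h0, zero_mul]
  -- the shifting bijection
  set S : F → Set (MvPolynomial (Fin 2) F) := fun v =>
    {f : MvPolynomial (Fin 2) F |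
        MvPolynomial.degreeOf 0 f ≤ t ∧ MvPolynomial.degreeOf 1 f ≤ t ∧
        MvPolynomial.rename (Equiv.swap (0 : Fin 2) 1) f = f ∧
        MvPolynomial.eval ![0, 0] f = v ∧
        ∀ i ∈ B, MvPolynomial.aeval ![Polynomial.C i, Polynomial.X] f = g i} with hS_def
  have key : ∀ (a b : F) (f : MvPolynomial (Fin 2) F), f ∈ S a →
      f + MvPolynomial.C (b - a) * H ∈ S b := by
    intro a b f hf
    obtain ⟨h1, h2, h3, h4, h5⟩ := hf
    refine ⟨?_, ?_, ?_, ?_, ?_⟩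
    · exact le_trans (MvPolynomial.degreeOf_add_le _ _ _)
        (max_le h1 (le_trans (MvPolynomial.degreeOf_C_mul_le _ _ _) (hHdeg 0)))
    · exact le_trans (MvPolynomial.degreeOf_add_le _ _ _)
        (max_le h2 (le_trans (MvPolynomial.degreeOf_C_mul_le _ _ _) (hHdeg 1)))
    · rw [map_add, map_mul, h3, hHswap, MvPolynomial.rename_C]
    · rw [map_add, map_mul, h4, MvPolynomial.eval_C, hHeval, mul_one]
      ring
    · intro i hi
      rw [map_add, map_mul, hHrow i hi, mul_zero, add_zero]
      exact h5 i hi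
  have hinj2 : ∀ c : F, Function.Injective
      (fun f : MvPolynomial (Fin 2) F => f + MvPolynomial.C c * H) :=
    fun c => add_left_injective _
  have himage : S s' = (fun f => f + MvPolynomial.C (s' - s) * H) '' (S s) := by
    ext f
    constructor
    · intro hf
      refine ⟨f + MvPolynomial.C (s - s') * H, key s' s f hf, ?_⟩
      simp only [add_assoc, ← add_mul, ← map_add]
      simp
    · rintro ⟨f', hf', rfl⟩
      exact key s s' f' hf'
  show (S s).ncard = (S s').ncard
  rw [himage, Set.ncard_image_of_injective _ (hinj2 (s' - s))]
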